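/- Let a, m be integers with m ≥ 0 and let F(t) = (t+a)_m / m!. Then for every integer k and every integer λ ≥ 0, the rational number D_m^λ · (1/λ!) · F^{(λ)}(t)|_{t=−k} is an integer, where F^{(λ)} denotes the λ-th derivative of F. -/

import Mathlib

/-- The Pochhammer symbol `(x)ₖ = x(x+1)⋯(x+k-1)` for a real `x`. -/
noncomputable def poch (x : ℝ) (k : ℕ) : ℝ := ∏ m ∈ Finset.range k, (x + m)

open Polynomial Finset


private lemma dvd_lcmIcc {j m : ℕ} (h1 : 1 ≤ j) (h2 : j ≤ m) : j ∣ (Finset.Icc 1 m).lcm id :=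
  Finset.dvd_lcm (Finset.mem_Icc.mpr ⟨h1, h2⟩)

private lemma fact_dvd_asc (l : ℕ) (z : ℤ) : (l.factorial : ℤ) ∣ (ascPochhammer ℤ l).eval z := by
  rcases z with p | q
  · rw [Int.ofNat_eq_coe, ← ascPochhammer_eval_cast]
    rw [ascPochhammer_nat_eq_ascFactorial]
    exact Int.natCast_dvd_natCast.mpr (Nat.factorial_dvd_ascFactorial _ _)
  · have h : (Int.negSucc q) = -((q+1 : ℕ) : ℤ) := by simp [Int.negSucc_eq]
    rw [h, ascPochhammer_eval_neg_eq_descPochhammer, descPochhammer_eval_eq_descFactorial]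
    exact Dvd.dvd.mul_left (Int.natCast_dvd_natCast.mpr (Nat.factorial_dvd_descFactorial _ _)) _

private lemma descPoch_eq_prod (j : ℕ) :
    descPochhammer ℤ j = ∏ i ∈ range j, (X + C (-(i : ℤ))) := by
  induction j with
  | zero => simp [descPochhammer_zero]
  | succ n ih =>
    rw [descPochhammer_succ_right, prod_range_succ, ih]
    congr 1
    simp [C_eq_natCast, sub_eq_add_neg]

-- nat core: for t ⊆ range j, #t = j - lam, lam ≤ j ≤ m, 0 ∉ t:
private lemma nat_core {m j lam : ℕ} (hj1 : 1 ≤ j) (hjm : j ≤ m) (hl : lam ≤ j)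
    {t : Finset ℕ} (hts : t ⊆ range j) (htc : t.card = j - lam) (h0 : 0 ∉ t) :
    j.factorial ∣ ((Finset.Icc 1 m).lcm id) ^ lam * ∏ i ∈ t, i := by
  have hlam1 : 1 ≤ lam := by
    by_contra h
    have : lam = 0 := by omega
    subst this
    have : t = range j := Finset.eq_of_subset_of_card_le hts (by simp [htc])
    exact h0 (this ▸ (by simp [Finset.mem_range]; omega))
  set D := (Finset.Icc 1 m).lcm id with hD
  -- complement
  set u := (range j) \ t with hu
  have hcardu : u.card = lam := by
    rw [hu, Finset.card_sdiff_of_subset hts, htc, Finset.card_range]; omega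
  have h0u : 0 ∈ u := by
    rw [hu, Finset.mem_sdiff]
    exact ⟨Finset.mem_range.mpr (by omega), h0⟩
  set c := u.erase 0 with hc
  have hcardc : c.card = lam - 1 := by rw [hc, Finset.card_erase_of_mem h0u, hcardu]
  -- (j-1)! = ∏ t * ∏ c
  have hsplit : (Finset.Ico 1 j) = t ∪ c := by
    ext x
    simp only [Finset.mem_Ico, hc, hu, Finset.mem_union, Finset.mem_erase, Finset.mem_sdiff,
      Finset.mem_range]
    constructor
    · intro hx
      by_cases hxt : x ∈ t
      · exact Or.inl hxt
      · exact Or.inr ⟨by omega, by omega, hxt⟩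
    · rintro (hx | hx)
      · have := Finset.mem_range.mp (hts hx)
        have : x ≠ 0 := fun h => h0 (h ▸ hx)
        omega
      · omega
  have hdisj : Disjoint t c := by
    rw [hc, hu]
    exact Finset.disjoint_of_subset_right (Finset.erase_subset _ _) Finset.sdiff_disjoint.symm
  have hfact : (j-1).factorial = (∏ i ∈ t, i) * ∏ i ∈ c, i := by
    rw [← Finset.prod_union hdisj, ← hsplit, ← Finset.prod_Ico_id_eq_factorial,
      show j - 1 + 1 = j by omega]
  -- c products divide D^(lam-1)
  have hcdvd : (∏ i ∈ c, i) ∣ D ^ (lam - 1) := by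
    calc (∏ i ∈ c, i) ∣ ∏ _i ∈ c, D := by
          refine Finset.prod_dvd_prod_of_dvd _ _ (fun i hi => ?_)
          have hi' : i ∈ u := Finset.mem_of_mem_erase hi
          have : i ≠ 0 := Finset.ne_of_mem_erase hi
          have : i < j := Finset.mem_range.mp ((Finset.mem_sdiff.mp hi').1)
          exact dvd_lcmIcc (by omega) (by omega)
      _ = D ^ c.card := Finset.prod_const D
      _ = D ^ (lam - 1) := by rw [hcardc]
  have hjD : j ∣ D := dvd_lcmIcc hj1 hjm
  have : j * ∏ i ∈ c, i ∣ D ^ lam := by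
    have := mul_dvd_mul hjD hcdvd
    rwa [← pow_succ' D (lam-1), Nat.sub_add_cancel hlam1] at this
  calc j.factorial = (j * ∏ i ∈ c, i) * ∏ i ∈ t, i := by
        rw [← Nat.mul_factorial_pred (by omega : j ≠ 0), hfact]; ring
    _ ∣ D ^ lam * ∏ i ∈ t, i := mul_dvd_mul_right this _

private lemma L1 {j m : ℕ} (hjm : j ≤ m) (lam : ℕ) :
    (j.factorial : ℤ) ∣ (((Finset.Icc 1 m).lcm id : ℕ) : ℤ) ^ lam * (descPochhammer ℤ j).coeff lam := by
  by_cases hl : lam ≤ j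
  · rw [descPoch_eq_prod, Finset.prod_X_add_C_coeff _ _ (by simpa using hl)]
    rw [Finset.mul_sum]
    refine Finset.dvd_sum ?_
    intro t ht
    rw [Finset.mem_powersetCard] at ht
    obtain ⟨hts, htc⟩ := ht
    rw [Finset.card_range] at htc
    by_cases hj0 : j = 0
    · subst hj0; simp
    by_cases h0 : (0:ℕ) ∈ t
    · rw [Finset.prod_eq_zero h0 (by simp)]
      simp
    · have hsign : (∏ i ∈ t, (-(i:ℤ))) = (-1)^t.card * ∏ i ∈ t, (i:ℤ) := by
        rw [← Finset.prod_const, ← Finset.prod_mul_distrib]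
        simp
      rw [hsign]
      have := nat_core (by omega : 1 ≤ j) hjm hl hts htc h0
      obtain ⟨w, hw⟩ := this
      have hw' := congrArg (fun x : ℕ => (x:ℤ)) hw
      push_cast at hw'
      exact ⟨(-1)^t.card * w, by linear_combination ((-1:ℤ)^t.card) * hw'⟩
  · have hd : (descPochhammer ℤ j).coeff lam = 0 := by
      apply coeff_eq_zero_of_natDegree_lt
      rw [descPochhammer_natDegree]
      omega
    simp [hd]

private lemma scalar (n : ℤ) (m j : ℕ) (hj : j ≤ m) :
    (m.choose j : ℤ) * (ascPochhammer ℤ (m-j)).eval (n+j)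
      + (m.choose (j+1) : ℤ) * (ascPochhammer ℤ (m-j-1)).eval (n+j+1) * (n+m+j+1)
    = ((m+1).choose (j+1) : ℤ) * (ascPochhammer ℤ (m-j)).eval (n+j+1) := by
  rcases eq_or_lt_of_le hj with rfl | hlt
  · simp [Nat.sub_self, Nat.choose_succ_self]
  · have hml : m - j = (m - j - 1) + 1 := by omega
    set l := m - j - 1 with hldef
    rw [hml]
    have h1 : (ascPochhammer ℤ (l+1)).eval (n+j) = (n+j) * (ascPochhammer ℤ l).eval (n+j+1) := by
      rw [ascPochhammer_succ_left]
      simp [eval_comp]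
    have h2 : (ascPochhammer ℤ (l+1)).eval (n+j+1)
        = (ascPochhammer ℤ l).eval (n+j+1) * (n+j+1+l) := ascPochhammer_succ_eval l _
    have hlcast : (l : ℤ) = (m:ℤ) - j - 1 := by
      have : (j:ℤ) < m := by exact_mod_cast hlt
      omega
    have hpascal : (((m+1).choose (j+1) : ℕ) : ℤ) = (m.choose j : ℤ) + m.choose (j+1) := by
      exact_mod_cast congrArg (fun x : ℕ => (x:ℤ)) (Nat.choose_succ_succ (m) (j))
    have hsucc : ((j:ℤ)+1) * m.choose (j+1) = ((m:ℤ) - j) * m.choose j := by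
      have h := Nat.choose_succ_right_eq m j
      zify [hj] at h
      linarith [h]
    rw [h1, h2, hlcast]
    set E := (ascPochhammer ℤ l).eval (n+j+1)
    linear_combination (-(n+(m:ℤ))*E) * hpascal + E * hsucc

private lemma vandermonde (n : ℤ) (m : ℕ) :
    (∏ i ∈ range m, (X + C (n + (i:ℤ)))) =
      ∑ j ∈ range (m+1),
        C ((m.choose j : ℤ) * (ascPochhammer ℤ (m - j)).eval (n + (j:ℤ))) * descPochhammer ℤ j := by
  induction m with
  | zero => simp
  | succ m ih =>
    have hstep : ∀ j : ℕ, descPochhammer ℤ j * (X + C (n+(m:ℤ))) =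
        descPochhammer ℤ (j+1) + C (n+(m:ℤ)+(j:ℤ)) * descPochhammer ℤ j := by
      intro j
      have hX : (X + C (n + (m:ℤ))) = (X - ((j:ℕ) : ℤ[X])) + C (n + (m:ℤ) + (j:ℤ)) := by
        simp only [← C_eq_natCast, map_add]
        ring
      rw [hX, mul_add, ← descPochhammer_succ_right, mul_comm (descPochhammer ℤ j) (C _)]
    rw [prod_range_succ, ih, Finset.sum_mul]
    have hterm : ∀ j ∈ range (m+1),
        (C ((m.choose j : ℤ) * (ascPochhammer ℤ (m - j)).eval (n + (j:ℤ))) * descPochhammer ℤ j)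
            * (X + C (n+(m:ℤ)))
        = C ((m.choose j : ℤ) * (ascPochhammer ℤ (m - j)).eval (n + (j:ℤ)))
              * descPochhammer ℤ (j+1)
          + C ((m.choose j : ℤ) * (ascPochhammer ℤ (m - j)).eval (n + (j:ℤ)) * (n+(m:ℤ)+(j:ℤ)))
              * descPochhammer ℤ j := by
      intro j _
      rw [mul_assoc, hstep j, mul_add, ← mul_assoc, ← map_mul]
    rw [Finset.sum_congr rfl hterm, Finset.sum_add_distrib]
    -- second sum: peel index 0
    rw [Finset.sum_range_succ'
      (fun j => C ((m.choose j : ℤ) * (ascPochhammer ℤ (m - j)).eval (n + (j:ℤ)) * (n+(m:ℤ)+(j:ℤ)))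
        * descPochhammer ℤ j) m]
    -- RHS: peel index 0
    rw [Finset.sum_range_succ'
      (fun j => C (((m+1).choose j : ℤ) * (ascPochhammer ℤ (m + 1 - j)).eval (n + (j:ℤ)))
        * descPochhammer ℤ j) (m+1)]
    -- extend the inner range m sum to range (m+1)
    rw [show (∑ j ∈ range m,
        C ((m.choose (j+1) : ℤ) * (ascPochhammer ℤ (m - (j+1))).eval (n + ((j+1:ℕ):ℤ))
            * (n+(m:ℤ)+((j+1:ℕ):ℤ))) * descPochhammer ℤ (j+1))
      = ∑ j ∈ range (m+1),
        C ((m.choose (j+1) : ℤ) * (ascPochhammer ℤ (m - (j+1))).eval (n + ((j+1:ℕ):ℤ))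
            * (n+(m:ℤ)+((j+1:ℕ):ℤ))) * descPochhammer ℤ (j+1) from by
      rw [Finset.sum_range_succ]
      simp [Nat.choose_succ_self]]
    rw [← add_assoc, ← Finset.sum_add_distrib]
    congr 1
    · refine Finset.sum_congr rfl (fun j hj => ?_)
      have hj' : j ≤ m := by rw [mem_range] at hj; omega
      have hs := scalar n m j hj'
      rw [← add_mul, ← map_add]
      congr 1
      congr 1
      rw [Nat.succ_sub_succ]
      push_cast
      rw [show n + ((j:ℤ)+1) = n + (j:ℤ) + 1 from by ring]
      rw [Nat.sub_sub] at hs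
      linear_combination hs
    · congr 1
      rw [Nat.choose_zero_right, Nat.choose_zero_right, Nat.sub_zero, Nat.sub_zero,
        ascPochhammer_succ_eval]
      push_cast
      ring

private lemma key (n : ℤ) (m lam : ℕ) :
    (m.factorial : ℤ) ∣ (((Finset.Icc 1 m).lcm id : ℕ) : ℤ) ^ lam
      * (∏ i ∈ range m, (X + C (n + (i:ℤ)))).coeff lam := by
  rw [vandermonde, finset_sum_coeff, Finset.mul_sum]
  refine Finset.dvd_sum (fun j hj => ?_)
  have hjm : j ≤ m := by rw [mem_range] at hj; omega
  rw [coeff_C_mul]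
  set D : ℤ := (((Finset.Icc 1 m).lcm id : ℕ) : ℤ)
  have h1 : ((m-j).factorial : ℤ) ∣ (ascPochhammer ℤ (m-j)).eval (n+(j:ℤ)) := fact_dvd_asc _ _
  have h2 : (j.factorial : ℤ) ∣ D ^ lam * (descPochhammer ℤ j).coeff lam := L1 hjm lam
  have key0 : (m.factorial : ℤ)
      = ((m.choose j : ℤ) * (j.factorial : ℤ)) * ((m-j).factorial : ℤ) := by
    exact_mod_cast congrArg (fun x : ℕ => (x:ℤ)) (Nat.choose_mul_factorial_mul_factorial hjm).symm
  rw [key0]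
  calc ((m.choose j : ℤ) * (j.factorial : ℤ)) * ((m-j).factorial : ℤ)
      ∣ ((m.choose j : ℤ) * (D ^ lam * (descPochhammer ℤ j).coeff lam))
          * (ascPochhammer ℤ (m-j)).eval (n+(j:ℤ)) :=
        mul_dvd_mul (mul_dvd_mul_left _ h2) h1
    _ = D ^ lam * ((m.choose j : ℤ) * (ascPochhammer ℤ (m-j)).eval (n+(j:ℤ))
          * (descPochhammer ℤ j).coeff lam) := by ring

private lemma iter_deriv_poly (q : ℝ[X]) (ν : ℕ) :
    iteratedDeriv ν (fun x => q.eval x) = fun x => ((Polynomial.derivative)^[ν] q).eval x := by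
  induction ν with
  | zero => simp
  | succ ν ih =>
    rw [iteratedDeriv_succ, ih, Function.iterate_succ_apply']
    funext x
    exact Polynomial.deriv _

/-- **Lemma (numerator-type elementary bricks).** For `F(t) = (t+a)_m / m!` and any integer `k`
and any `λ ≥ 0`, the number `D_m^λ · (1/λ!) · F^{(λ)}(-k)` is an integer, where
`D_m = lcm(1,2,…,m)`. -/
theorem brick_numerator_integrality (a : ℤ) (m : ℕ) (k : ℤ) (lam : ℕ) :
    ∃ z : ℤ,
      (((Finset.Icc 1 m).lcm id : ℕ) : ℝ) ^ lam * (1 / (lam.factorial : ℝ)) *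
        iteratedDeriv lam (fun t : ℝ => poch (t + (a : ℝ)) m / (m.factorial : ℝ)) (-(k : ℝ))
      = (z : ℝ) := by
  set D : ℕ := (Finset.Icc 1 m).lcm id with hD
  set n : ℤ := a - k with hn
  set Qz : ℤ[X] := ∏ i ∈ range m, (X + C (n + (i:ℤ))) with hQz
  obtain ⟨z, hz⟩ := key n m lam
  refine ⟨z, ?_⟩
  set QR : ℝ[X] := ∏ i ∈ range m, (X + C ((a:ℝ) + (i:ℝ))) with hQR
  set P : ℝ[X] := C ((m.factorial : ℝ))⁻¹ * QR with hP
  -- the function equals eval of P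
  have hfun : (fun t : ℝ => poch (t + (a : ℝ)) m / (m.factorial : ℝ)) = fun t => P.eval t := by
    funext t
    rw [hP, eval_mul, eval_C, hQR, eval_prod, poch]
    rw [div_eq_inv_mul]
    congr 1
    refine Finset.prod_congr rfl (fun i _ => ?_)
    rw [eval_add, eval_X, eval_C]
    ring
  rw [hfun, iter_deriv_poly]
  -- iterated derivative via hasse derivative
  have hhd : (Polynomial.derivative)^[lam] P = lam.factorial • (hasseDeriv lam P) := by
    rw [← Polynomial.factorial_smul_hasseDeriv]
    rfl
  rw [hhd]
  beta_reduce
  rw [eval_smul]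
  -- hasseDeriv of C * Q
  have hP2 : hasseDeriv lam P = C ((m.factorial : ℝ))⁻¹ * hasseDeriv lam QR := by
    rw [hP, ← smul_eq_C_mul, map_smul, smul_eq_C_mul]
  rw [hP2, eval_mul, eval_C]
  -- hasseDeriv eval = taylor coeff
  have htc : (hasseDeriv lam QR).eval (-(k:ℝ)) = (taylor (-(k:ℝ)) QR).coeff lam := by
    rw [taylor_coeff]
  rw [htc]
  -- taylor of the product
  have hty : taylor (-(k:ℝ)) QR = ∏ i ∈ range m, (X + C (((n:ℤ):ℝ) + (i:ℝ))) := by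
    rw [taylor_apply, hQR, Polynomial.prod_comp]
    refine Finset.prod_congr rfl (fun i _ => ?_)
    rw [add_comp, X_comp, C_comp, add_assoc, ← map_add]
    congr 1
    push_cast [hn]
    ring
  rw [hty]
  -- relate to ℤ coefficients
  have hmap : (∏ i ∈ range m, (X + C (((n:ℤ):ℝ) + (i:ℝ)))) = Qz.map (Int.castRingHom ℝ) := by
    rw [hQz, Polynomial.map_prod]
    refine Finset.prod_congr rfl (fun i _ => ?_)
    rw [Polynomial.map_add, Polynomial.map_X, Polynomial.map_C]
    congr 1
    simp only [eq_intCast, Int.cast_add, Int.cast_natCast]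
  rw [hmap, Polynomial.coeff_map]
  -- finish with arithmetic
  have hzR : ((D:ℤ):ℝ)^lam * ((Qz.coeff lam : ℤ):ℝ) = (m.factorial : ℝ) * (z:ℝ) := by
    exact_mod_cast congrArg (fun x : ℤ => (x:ℝ)) hz
  have hm0 : (m.factorial : ℝ) ≠ 0 := Nat.cast_ne_zero.mpr (Nat.factorial_ne_zero m)
  have hl0 : (lam.factorial : ℝ) ≠ 0 := Nat.cast_ne_zero.mpr (Nat.factorial_ne_zero lam)
  push_cast at hzR ⊢
  field_simp
  linear_combination ((lam.factorial : ℝ) * (m.factorial : ℝ)⁻¹) * hzR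
    + ((lam.factorial : ℝ) * (z:ℝ)) * mul_inv_cancel₀ hm0
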